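/- Let μ be the probability measure on ℝ whose cumulative distribution function is F(t) = exp(−exp(−(t + c))), where c is the Euler–Mascheroni constant. Then μ has finite first moment and its expectation is 0, i.e. ∫ t dμ(t) = 0. -/

import Mathlib

open MeasureTheory Real

open Set Filter ProbabilityTheory

/-- The value of `∫ log t * exp (-t)` over `(0,∞)` is `-γ`. -/
lemma integral_log_mul_exp_neg_Ioi :
    ∫ t : ℝ in Ioi 0, Real.log t * Real.exp (-t) = -Real.eulerMascheroniConstant := by
  set r : ℝ := ∫ t : ℝ in Ioi 0, Real.log t * Real.exp (-t) with hr
  have h1 := Complex.hasDerivAt_GammaIntegral (s := 1) (by norm_num)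
  have hd : (∫ t : ℝ in Ioi 0, (t : ℂ) ^ ((1 : ℂ) - 1) * (Real.log t * Real.exp (-t))) = (r : ℂ) := by
    have cc : ∀ y : ℝ, (y : ℂ) = @RCLike.ofReal ℂ _ y := fun _ => rfl
    rw [hr, cc, ← integral_ofReal]
    refine setIntegral_congr_fun measurableSet_Ioi (fun t ht => ?_)
    simp [Complex.cpow_zero]
  rw [hd] at h1
  have h2 : HasDerivAt (fun x : ℝ => (Complex.GammaIntegral x).re) ((r : ℂ)).re 1 := by
    have := h1
    rw [show (1 : ℂ) = ((1 : ℝ) : ℂ) by norm_num] at this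
    exact this.real_of_complex
  have heq : (fun x : ℝ => (Complex.GammaIntegral x).re) =ᶠ[nhds (1:ℝ)] Real.Gamma := by
    filter_upwards [eventually_gt_nhds (show (0:ℝ) < 1 by norm_num)] with x hx
    rw [Real.Gamma, Complex.Gamma_eq_integral (by simpa using hx)]
  have h3 : HasDerivAt Real.Gamma r 1 := by
    simpa using h2.congr_of_eventuallyEq heq.symm
  have := h3.unique Real.hasDerivAt_Gamma_one
  linarith

open Asymptotics in
/-- `log t * exp (-t)` is integrable on `(0,∞)`. -/
lemma integrableOn_log_mul_exp_neg_Ioi :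
    IntegrableOn (fun t : ℝ => Real.log t * Real.exp (-t)) (Ioi 0) := by
  have h := (mellin_hasDerivAt_of_isBigO_rpow (E := ℂ) (a := 2) (b := 0)
      (f := fun x : ℝ => (Real.exp (-x) : ℂ)) (s := 1) ?_ ?_ (by norm_num) ?_ (by norm_num)).1
  · have h2 : IntegrableOn
        (fun t : ℝ => ((Real.log t * Real.exp (-t) : ℝ) : ℂ)) (Ioi 0) := by
      refine h.congr_fun (fun t ht => ?_) measurableSet_Ioi
      push_cast
      simp [Complex.cpow_zero, smul_eq_mul]
    exact h2.re.congr (Filter.Eventually.of_forall fun x => rfl)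
  · refine (Continuous.continuousOn ?_).locallyIntegrableOn measurableSet_Ioi
    exact Complex.continuous_ofReal.comp (Real.continuous_exp.comp continuous_neg)
  · rw [← isBigO_norm_left]
    simp_rw [Complex.norm_real, isBigO_norm_left]
    simpa only [neg_one_mul] using (isLittleO_exp_neg_mul_rpow_atTop zero_lt_one _).isBigO
  · simp_rw [neg_zero, Real.rpow_zero]
    refine isBigO_const_of_tendsto (?_ : Tendsto _ _ (nhds (1 : ℂ))) one_ne_zero
    rw [(by simp : (1 : ℂ) = Real.exp (-0))]
    exact (Complex.continuous_ofReal.comp (Real.continuous_exp.comp continuous_neg)).continuousWithinAt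

/-- If `μ` is the probability measure on `ℝ` whose cumulative distribution
function is `F t = exp (-exp (-(t + c)))`, with `c` the Euler–Mascheroni constant (i.e. the
zero-mean Gumbel distribution), then `μ` has finite first moment and its expectation is `0`. -/
theorem gumbel_mean_zero (μ : Measure ℝ) [IsProbabilityMeasure μ]
    (hcdf : ∀ t : ℝ,
      μ (Set.Iic t) = ENNReal.ofReal (exp (-exp (-(t + eulerMascheroniConstant))))) :
    Integrable (fun t : ℝ => t) μ ∧ ∫ t : ℝ, t ∂μ = 0 := by
  haveI hprob : IsProbabilityMeasure (expMeasure 1) := isProbabilityMeasure_expMeasure one_pos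
  set c := Real.eulerMascheroniConstant with hc
  set g : ℝ → ℝ := fun x => -Real.log x - c with hgdef
  have hgm : Measurable g := measurable_log.neg.sub measurable_const
  set d : ℝ → ℝ := fun x => if 0 ≤ x then rexp (-x) else 0 with hddef
  have hd_meas0 : Measurable d := by
    refine Measurable.ite ?_ (measurable_exp.comp measurable_neg) measurable_const
    exact measurableSet_Ici
  have hd_meas : Measurable fun x => (d x).toNNReal := hd_meas0.real_toNNReal
  have hdens : expMeasure 1 = volume.withDensity (fun x => ((d x).toNNReal : ENNReal)) := by
    have h0 : expMeasure 1 = volume.withDensity (exponentialPDF 1) := rfl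
    rw [h0]
    congr 1
    funext x
    rw [exponentialPDF_eq]
    show ENNReal.ofReal _ = ENNReal.ofReal (d x)
    simp [hddef]
  -- CDF facts for the exponential measure
  have hIic1 : ∀ x : ℝ, 0 ≤ x → expMeasure 1 (Set.Iic x) = ENNReal.ofReal (1 - rexp (-x)) := by
    intro x hx
    rw [← ProbabilityTheory.ofReal_cdf (μ := expMeasure 1) x]
    have h1 := cdf_expMeasure_eq one_pos x
    rw [if_pos hx, one_mul] at h1
    rw [h1]
  have hIic0 : expMeasure 1 (Set.Iic 0) = 0 := by
    rw [hIic1 0 le_rfl]; simp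
  have hIoi : ∀ a : ℝ, 0 ≤ a → expMeasure 1 (Set.Ioi a) = ENNReal.ofReal (rexp (-a)) := by
    intro a ha
    have hcompl : expMeasure 1 (Set.Ioi a) = 1 - expMeasure 1 (Set.Iic a) := by
      rw [← compl_Iic,
        measure_compl (measurableSet_Iic : MeasurableSet (Set.Iic a)) (measure_ne_top _ _),
        measure_univ]
    have hq : (0:ℝ) ≤ 1 - rexp (-a) := by
      have : rexp (-a) ≤ 1 := exp_le_one_iff.mpr (neg_nonpos.mpr ha)
      linarith
    rw [hcompl, hIic1 a ha, ← ENNReal.ofReal_one,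
      ← ENNReal.ofReal_sub 1 hq]
    norm_num
  have hsingleton : ∀ a : ℝ, expMeasure 1 {a} = 0 := fun a => by
    rw [hdens]; exact (withDensity_absolutelyContinuous _ _) (measure_singleton a)
  have hIci : ∀ a : ℝ, 0 < a → expMeasure 1 (Set.Ici a) = ENNReal.ofReal (rexp (-a)) := by
    intro a ha
    rw [← hIoi a ha.le]
    refine le_antisymm ?_ (measure_mono Set.Ioi_subset_Ici_self)
    calc expMeasure 1 (Set.Ici a) ≤ expMeasure 1 ({a} ∪ Set.Ioi a) := by
          refine measure_mono fun x hx => ?_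
          rcases eq_or_lt_of_le (Set.mem_Ici.mp hx) with h | h
          · exact Or.inl h.symm
          · exact Or.inr h
      _ ≤ expMeasure 1 {a} + expMeasure 1 (Set.Ioi a) := measure_union_le _ _
      _ = expMeasure 1 (Set.Ioi a) := by rw [hsingleton a, zero_add]
  -- μ is the pushforward of the exponential measure under g
  have hmap : μ = (expMeasure 1).map g := by
    refine MeasureTheory.Measure.ext_of_Iic μ _ (fun t => ?_)
    rw [hcdf t, Measure.map_apply hgm measurableSet_Iic]
    set a := rexp (-(t + c)) with hadef
    have ha : 0 < a := exp_pos _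
    have hsub1 : Set.Ici a ⊆ g ⁻¹' Set.Iic t := by
      intro x hx
      have hx0 : 0 < x := lt_of_lt_of_le ha hx
      simp only [Set.mem_preimage, Set.mem_Iic, hgdef]
      have hlog : -(t + c) ≤ Real.log x := (Real.le_log_iff_exp_le hx0).2 hx
      linarith
    have hsub2 : g ⁻¹' Set.Iic t ⊆ Set.Ici a ∪ Set.Iic 0 := by
      intro x hx
      rcases le_or_gt x 0 with h | h
      · exact Or.inr h
      · refine Or.inl ?_
        simp only [Set.mem_preimage, Set.mem_Iic, hgdef] at hx
        have : -(t + c) ≤ Real.log x := by linarith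
        exact (Real.le_log_iff_exp_le h).1 this
    have hkey : expMeasure 1 (g ⁻¹' Set.Iic t) = ENNReal.ofReal (rexp (-a)) := by
      refine le_antisymm ?_ ?_
      · calc expMeasure 1 (g ⁻¹' Set.Iic t)
            ≤ expMeasure 1 (Set.Ici a ∪ Set.Iic 0) := measure_mono hsub2
          _ ≤ expMeasure 1 (Set.Ici a) + expMeasure 1 (Set.Iic 0) := measure_union_le _ _
          _ = ENNReal.ofReal (rexp (-a)) := by rw [hIic0, add_zero, hIci a ha]
      · rw [← hIci a ha]; exact measure_mono hsub1
    rw [hkey]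
  -- pointwise identification of the weighted function
  have heq : (fun x => (d x).toNNReal • g x)
      = (Set.Ici (0:ℝ)).indicator (fun x => rexp (-x) * g x) := by
    funext x
    simp only [Set.indicator, Set.mem_Ici, NNReal.smul_def, Real.coe_toNNReal', hddef]
    by_cases h : 0 ≤ x
    · simp [h, max_eq_left (exp_pos (-x)).le]
    · simp [h]
  -- integrability on (0,∞)
  have hexp : IntegrableOn (fun x : ℝ => rexp (-x)) (Ioi 0) := by
    simpa using exp_neg_integrableOn_Ioi 0 one_pos
  have hIOn : IntegrableOn (fun x => rexp (-x) * g x) (Ioi 0) := by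
    have h1 : IntegrableOn (fun x => -(Real.log x * rexp (-x)) - c * rexp (-x)) (Ioi 0) :=
      integrableOn_log_mul_exp_neg_Ioi.neg.sub (hexp.const_mul c)
    exact h1.congr_fun (fun x hx => by simp [hgdef]; ring) measurableSet_Ioi
  have hIOnIci : IntegrableOn (fun x => rexp (-x) * g x) (Ici 0) := by
    rwa [integrableOn_Ici_iff_integrableOn_Ioi]
  have hInt : Integrable g (expMeasure 1) := by
    rw [hdens, integrable_withDensity_iff_integrable_smul hd_meas]
    rw [heq, integrable_indicator_iff measurableSet_Ici]
    exact hIOnIci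
  have hval : ∫ x, g x ∂(expMeasure 1) = 0 := by
    rw [hdens, integral_withDensity_eq_integral_smul hd_meas, heq,
      integral_indicator measurableSet_Ici, integral_Ici_eq_integral_Ioi]
    have hcong : ∫ x in Ioi 0, rexp (-x) * g x
        = ∫ x in Ioi 0, (-(Real.log x * rexp (-x)) - c * rexp (-x)) :=
      setIntegral_congr_fun measurableSet_Ioi (fun x hx => by simp [hgdef]; ring)
    have hi1 : IntegrableOn (fun x : ℝ => -(Real.log x * rexp (-x))) (Ioi 0) := by
      exact integrableOn_log_mul_exp_neg_Ioi.neg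
    rw [hcong, integral_sub hi1 (hexp.const_mul c),
      integral_const_mul,
      integral_exp_neg_Ioi_zero]
    have hneg : ∫ x in Ioi (0:ℝ), -(Real.log x * rexp (-x)) = c := by
      rw [integral_neg, integral_log_mul_exp_neg_Ioi]; simp [hc]
    rw [hneg]; simp
  constructor
  · rw [hmap]
    exact (integrable_map_measure aestronglyMeasurable_id hgm.aemeasurable).mpr hInt
  · rw [hmap]
    exact (integral_map hgm.aemeasurable aestronglyMeasurable_id).trans hval
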